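/- Let L ∈ GL(m, ℝ) have all eigenvalues of modulus less than 1 and ε > 0, let b(x, n) := (L(x) + ε L_⊥(n), L_⊥(n)), and let M := {(x(n), n) : n ∈ S^{m−1}} with x(n) := ε Σ_{k=0}^∞ L^k(L_⊥^{-k}(n)). Then the restriction of b to M is topologically conjugate to L_⊥ : S^{m−1} → S^{m−1}, via the projection π(x, n) := n. -/

import Mathlib

noncomputable section
noncomputable section

/-- All (complex) eigenvalues of the real matrix `M` have modulus less than 1. -/
def specLt1 {m : ℕ} (M : Matrix (Fin m) (Fin m) ℝ) : Prop :=
  ∀ μ ∈ spectrum ℂ (M.map Complex.ofReal), ‖μ‖ < 1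

/-- The induced map `L_⊥(n) = (Lᵀ)⁻¹ n / ‖(Lᵀ)⁻¹ n‖` on unit normal vectors. -/
def Lperp {m : ℕ} (M : Matrix (Fin m) (Fin m) ℝ) (n : EuclideanSpace ℝ (Fin m)) :
    EuclideanSpace ℝ (Fin m) :=
  ‖Matrix.toEuclideanLin M.transpose⁻¹ n‖⁻¹ • Matrix.toEuclideanLin M.transpose⁻¹ n

/-- The inverse `L_⊥⁻¹(n) = Lᵀ n / ‖Lᵀ n‖`. -/
def LperpInv {m : ℕ} (M : Matrix (Fin m) (Fin m) ℝ) (n : EuclideanSpace ℝ (Fin m)) :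
    EuclideanSpace ℝ (Fin m) :=
  ‖Matrix.toEuclideanLin M.transpose n‖⁻¹ • Matrix.toEuclideanLin M.transpose n

/-- `x(n) = ε ∑ₖ L^k (L_⊥^{-k}(n))`. -/
def xBd {m : ℕ} (M : Matrix (Fin m) (Fin m) ℝ) (ε : ℝ) (n : EuclideanSpace ℝ (Fin m)) :
    EuclideanSpace ℝ (Fin m) :=
  ε • ∑' k : ℕ, (fun v => Matrix.toEuclideanLin M v)^[k] ((LperpInv M)^[k] n)

/-- The boundary map `b(x, n) = (L(x) + ε L_⊥(n), L_⊥(n))`. -/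
def bMap {m : ℕ} (M : Matrix (Fin m) (Fin m) ℝ) (ε : ℝ)
    (p : EuclideanSpace ℝ (Fin m) × EuclideanSpace ℝ (Fin m)) :
    EuclideanSpace ℝ (Fin m) × EuclideanSpace ℝ (Fin m) :=
  (Matrix.toEuclideanLin M p.1 + ε • Lperp M p.2, Lperp M p.2)
/-- The unit normal bundle of the attractor boundary:
`{(x(n), n) : n ∈ S^{m-1}}` as a subset of `ℝ^m × ℝ^m`. -/
def normalBundle {m : ℕ} (M : Matrix (Fin m) (Fin m) ℝ) (ε : ℝ) :
    Set (EuclideanSpace ℝ (Fin m) × EuclideanSpace ℝ (Fin m)) :=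
  {p | ‖p.2‖ = 1 ∧ p.1 = xBd M ε p.2}

open Matrix
open scoped NNReal ENNReal
variable {m : ℕ}
abbrev E (m : ℕ) := EuclideanSpace ℝ (Fin m)

lemma clm_eq (A : Matrix (Fin m) (Fin m) ℝ) (v : E m) :
    Matrix.toEuclideanLin A v = Matrix.toEuclideanCLM (𝕜 := ℝ) A v := rfl

lemma iter_eq (A : Matrix (Fin m) (Fin m) ℝ) (k : ℕ) (v : E m) :
    (fun v => Matrix.toEuclideanLin A v)^[k] v = Matrix.toEuclideanCLM (𝕜 := ℝ) (A ^ k) v := by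
  induction k generalizing v with
  | zero => simp
  | succ k ih =>
    rw [Function.iterate_succ_apply', ih, pow_succ', _root_.map_mul]
    rfl

lemma complexify (A : Matrix (Fin m) (Fin m) ℝ) (v : E m) :
    Matrix.toEuclideanLin (A.map Complex.ofReal)
      ((WithLp.equiv 2 (Fin m → ℂ)).symm fun i => (v i : ℂ)) =
    (WithLp.equiv 2 (Fin m → ℂ)).symm fun i => ((Matrix.toEuclideanLin A v) i : ℂ) := by
  rw [Matrix.toEuclideanLin_apply, Matrix.toEuclideanLin_apply]
  congr 1
  funext i
  show ∑ j, (A i j : ℂ) * (v j : ℂ) = (((A *ᵥ fun j => v j) : Fin m → ℝ) i : ℂ)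
  push_cast
  simp [Matrix.mulVec, dotProduct]

lemma norm_complexify (v : E m) :
    ‖(WithLp.equiv 2 (Fin m → ℂ)).symm fun i => (v i : ℂ)‖ = ‖v‖ := by
  rw [EuclideanSpace.norm_eq, EuclideanSpace.norm_eq]
  congr 1
  apply Finset.sum_congr rfl
  intro i _
  show ‖((v i : ℝ) : ℂ)‖ ^ 2 = _
  rw [Complex.norm_real]

lemma norm_real_apply_le (A : Matrix (Fin m) (Fin m) ℝ) (v : E m) :
    ‖Matrix.toEuclideanCLM (𝕜 := ℝ) A v‖ ≤
      ‖Matrix.toEuclideanCLM (𝕜 := ℂ) (A.map Complex.ofReal)‖ * ‖v‖ := by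
  have h1 : Matrix.toEuclideanCLM (𝕜 := ℂ) (A.map Complex.ofReal)
      ((WithLp.equiv 2 (Fin m → ℂ)).symm fun i => (v i : ℂ)) =
      (WithLp.equiv 2 (Fin m → ℂ)).symm fun i => ((Matrix.toEuclideanCLM (𝕜 := ℝ) A v) i : ℂ) :=
    complexify A v
  calc ‖Matrix.toEuclideanCLM (𝕜 := ℝ) A v‖
      = ‖(WithLp.equiv 2 (Fin m → ℂ)).symm fun i => ((Matrix.toEuclideanCLM (𝕜 := ℝ) A v) i : ℂ)‖ :=
        (norm_complexify _).symm
    _ = ‖Matrix.toEuclideanCLM (𝕜 := ℂ) (A.map Complex.ofReal)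
          ((WithLp.equiv 2 (Fin m → ℂ)).symm fun i => (v i : ℂ))‖ := by rw [h1]
    _ ≤ ‖Matrix.toEuclideanCLM (𝕜 := ℂ) (A.map Complex.ofReal)‖ *
          ‖(WithLp.equiv 2 (Fin m → ℂ)).symm fun i => (v i : ℂ)‖ :=
        ContinuousLinearMap.le_opNorm _ _
    _ = _ := by rw [norm_complexify]

lemma map_pow_ofReal (A : Matrix (Fin m) (Fin m) ℝ) (k : ℕ) :
    (A ^ k).map Complex.ofReal = (A.map Complex.ofReal) ^ k := by
  have h := (map_pow (Complex.ofRealHom.mapMatrix (m := Fin m)) A k).symm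
  rw [RingHom.mapMatrix_apply, RingHom.mapMatrix_apply] at h
  exact h.symm

lemma spec_bound (M : Matrix (Fin m) (Fin m) ℝ)
    (hspec : ∀ μ ∈ spectrum ℂ (M.map Complex.ofReal), ‖μ‖ < 1) :
    ∃ C r : ℝ, 0 < C ∧ 0 < r ∧ r < 1 ∧
      ∀ k (v : E m), ‖Matrix.toEuclideanCLM (𝕜 := ℝ) (M ^ k) v‖ ≤ C * r ^ k * ‖v‖ := by
  set Tc := Matrix.toEuclideanCLM (𝕜 := ℂ) (M.map Complex.ofReal) with hTc
  have hspecTc : spectrum ℂ Tc = spectrum ℂ (M.map Complex.ofReal) :=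
    AlgEquiv.spectrum_eq (Matrix.toEuclideanCLM (𝕜 := ℂ) (n := Fin m)) _
  have hrad : spectralRadius ℂ Tc < 1 := by
    rcases Set.eq_empty_or_nonempty (spectrum ℂ Tc) with he | hne
    · rw [spectralRadius, he]
      simp
    · have := spectrum.spectralRadius_lt_of_forall_lt_of_nonempty hne (r := 1)
        (fun z hz => by
          have := hspec z (hspecTc ▸ hz)
          simpa [← NNReal.coe_lt_coe] using this)
      simpa using this
  obtain ⟨r, hr1, hr2⟩ := ENNReal.lt_iff_exists_nnreal_btwn.mp hrad
  have hr0 : r ≠ 0 := by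
    rintro rfl
    simp only [ENNReal.coe_zero] at hr1
    exact (not_lt_of_ge zero_le) hr1
  have hrpos : (0 : ℝ) < r := by exact_mod_cast pos_iff_ne_zero.mpr hr0
  have hrlt1 : (r : ℝ) < 1 := by exact_mod_cast hr2
  have hev := (spectrum.pow_nnnorm_pow_one_div_tendsto_nhds_spectralRadius Tc).eventually_lt_const hr1
  obtain ⟨N, hN⟩ := Filter.eventually_atTop.mp hev
  have key : ∀ n, N + 1 ≤ n → ‖Tc ^ n‖ ≤ (r : ℝ) ^ n := by
    intro n hn
    have hn1 : (1 : ℕ) ≤ n := le_trans (Nat.le_add_left 1 N) hn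
    have h := hN n (le_trans (Nat.le_succ N) hn)
    have hnne : ((n : ℝ)) ≠ 0 := by positivity
    have h2 := ENNReal.rpow_le_rpow h.le (by positivity : (0:ℝ) ≤ (n : ℝ))
    rw [← ENNReal.rpow_mul, one_div_mul_cancel hnne, ENNReal.rpow_one,
      ENNReal.rpow_natCast] at h2
    have h3 : (‖Tc ^ n‖₊ : ℝ≥0∞) ≤ ((r ^ n : NNReal) : ℝ≥0∞) := by
      rw [ENNReal.coe_pow]; exact h2
    have h4 : ‖Tc ^ n‖₊ ≤ r ^ n := by exact_mod_cast h3
    calc ‖Tc ^ n‖ = (‖Tc ^ n‖₊ : ℝ) := rfl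
      _ ≤ ((r ^ n : NNReal) : ℝ) := by exact_mod_cast h4
      _ = (r : ℝ) ^ n := by push_cast; rfl
  set C : ℝ := 1 + (Finset.range (N + 1)).sum (fun k => ‖Tc ^ k‖ / (r:ℝ) ^ k) with hC
  have hsum_nonneg : 0 ≤ (Finset.range (N + 1)).sum (fun k => ‖Tc ^ k‖ / (r:ℝ) ^ k) :=
    Finset.sum_nonneg fun i _ => by positivity
  have hCpos : 0 < C := by rw [hC]; linarith
  have hC1 : (1:ℝ) ≤ C := by rw [hC]; linarith
  have hbound : ∀ k, ‖Tc ^ k‖ ≤ C * (r:ℝ) ^ k := by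
    intro k
    rcases le_or_gt k N with hk | hk
    · have hmem : k ∈ Finset.range (N+1) := Finset.mem_range.mpr (by omega)
      have hsing := Finset.single_le_sum (f := fun k => ‖Tc ^ k‖ / (r:ℝ) ^ k)
        (fun i _ => by positivity) hmem
      have hle : ‖Tc ^ k‖ / (r:ℝ) ^ k ≤ C := by rw [hC]; linarith
      calc ‖Tc ^ k‖ = (‖Tc ^ k‖ / (r:ℝ) ^ k) * (r:ℝ) ^ k := (div_mul_cancel₀ _ (by positivity : ((r:ℝ)) ^ k ≠ 0)).symm
        _ ≤ C * (r:ℝ) ^ k := mul_le_mul_of_nonneg_right hle (by positivity)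
    · have h1 := key k (by omega)
      have h2 : (r:ℝ) ^ k ≤ C * (r:ℝ) ^ k := le_mul_of_one_le_left (by positivity) hC1
      linarith
  refine ⟨C, r, hCpos, hrpos, hrlt1, fun k v => ?_⟩
  have h1 := norm_real_apply_le (M ^ k) v
  rw [map_pow_ofReal] at h1
  simp only [_root_.map_pow] at h1 ⊢
  calc ‖(Matrix.toEuclideanCLM (𝕜 := ℝ) M ^ k) v‖ ≤ ‖Tc ^ k‖ * ‖v‖ := h1
    _ ≤ (C * (r:ℝ) ^ k) * ‖v‖ := mul_le_mul_of_nonneg_right (hbound k) (norm_nonneg v)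
lemma toEuc_inv_comp {A : Matrix (Fin m) (Fin m) ℝ} (hA : IsUnit A.det) (v : E m) :
    Matrix.toEuclideanLin A⁻¹ (Matrix.toEuclideanLin A v) = v := by
  have h : Matrix.toEuclideanCLM (𝕜 := ℝ) A⁻¹ * Matrix.toEuclideanCLM (𝕜 := ℝ) A = 1 := by
    rw [← _root_.map_mul, Matrix.nonsing_inv_mul _ hA, _root_.map_one]
  calc Matrix.toEuclideanLin A⁻¹ (Matrix.toEuclideanLin A v)
      = (Matrix.toEuclideanCLM (𝕜 := ℝ) A⁻¹ * Matrix.toEuclideanCLM (𝕜 := ℝ) A) v := rfl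
    _ = v := by rw [h]; rfl

lemma toEuc_comp_inv {A : Matrix (Fin m) (Fin m) ℝ} (hA : IsUnit A.det) (v : E m) :
    Matrix.toEuclideanLin A (Matrix.toEuclideanLin A⁻¹ v) = v := by
  have h : Matrix.toEuclideanCLM (𝕜 := ℝ) A * Matrix.toEuclideanCLM (𝕜 := ℝ) A⁻¹ = 1 := by
    rw [← _root_.map_mul, Matrix.mul_nonsing_inv _ hA, _root_.map_one]
  calc Matrix.toEuclideanLin A (Matrix.toEuclideanLin A⁻¹ v)
      = (Matrix.toEuclideanCLM (𝕜 := ℝ) A * Matrix.toEuclideanCLM (𝕜 := ℝ) A⁻¹) v := rfl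
    _ = v := by rw [h]; rfl

lemma toEuc_ne_zero {A : Matrix (Fin m) (Fin m) ℝ} (hA : IsUnit A.det) {v : E m} (hv : v ≠ 0) :
    Matrix.toEuclideanLin A v ≠ 0 := by
  intro h
  apply hv
  have := toEuc_inv_comp hA v
  rw [h, _root_.map_zero] at this
  exact this.symm

lemma toEucInv_ne_zero {A : Matrix (Fin m) (Fin m) ℝ} (hA : IsUnit A.det) {v : E m} (hv : v ≠ 0) :
    Matrix.toEuclideanLin A⁻¹ v ≠ 0 := by
  intro h
  apply hv
  have := toEuc_comp_inv hA v
  rw [h, _root_.map_zero] at this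
  exact this.symm

variable {M : Matrix (Fin m) (Fin m) ℝ}

lemma detT (hdet : IsUnit M.det) : IsUnit M.transpose.det := by
  rwa [Matrix.det_transpose]

lemma norm_Lperp (hdet : IsUnit M.det) {n : E m} (hn : n ≠ 0) : ‖Lperp M n‖ = 1 := by
  have h := toEucInv_ne_zero (detT hdet) hn
  have hnorm : ‖Matrix.toEuclideanLin M.transpose⁻¹ n‖ ≠ 0 := norm_ne_zero_iff.mpr h
  rw [Lperp, norm_smul, norm_inv, norm_norm, inv_mul_cancel₀ hnorm]

lemma norm_LperpInv (hdet : IsUnit M.det) {n : E m} (hn : n ≠ 0) : ‖LperpInv M n‖ = 1 := by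
  have h := toEuc_ne_zero (detT hdet) hn
  have hnorm : ‖Matrix.toEuclideanLin M.transpose n‖ ≠ 0 := norm_ne_zero_iff.mpr h
  rw [LperpInv, norm_smul, norm_inv, norm_norm, inv_mul_cancel₀ hnorm]

lemma LperpInv_Lperp (hdet : IsUnit M.det) {n : E m} (hn : ‖n‖ = 1) :
    LperpInv M (Lperp M n) = n := by
  have hn0 : n ≠ 0 := by intro h; rw [h] at hn; simp at hn
  set w := Matrix.toEuclideanLin M.transpose⁻¹ n with hw
  have hw0 : w ≠ 0 := toEucInv_ne_zero (detT hdet) hn0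
  have hwn : ‖w‖ ≠ 0 := norm_ne_zero_iff.mpr hw0
  have hcpos : (0:ℝ) < ‖w‖⁻¹ := by positivity
  have hBw : Matrix.toEuclideanLin M.transpose w = n := toEuc_comp_inv (detT hdet) n
  rw [Lperp, LperpInv, ← hw, _root_.map_smul, hBw, norm_smul, Real.norm_eq_abs,
    abs_of_pos hcpos, hn, mul_one, inv_inv, smul_smul,
    mul_inv_cancel₀ hwn, one_smul]

lemma norm_iter_LperpInv (hdet : IsUnit M.det) {n : E m} (hn : ‖n‖ = 1) (k : ℕ) :
    ‖(LperpInv M)^[k] n‖ = 1 := by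
  induction k with
  | zero => simpa
  | succ k ih =>
    rw [Function.iterate_succ_apply']
    exact norm_LperpInv hdet (by intro h; rw [h] at ih; simp at ih)

lemma summable_aux (hdet : IsUnit M.det) (hspec : specLt1 M) {n : E m} (hn : ‖n‖ = 1) :
    Summable (fun k => (fun v => Matrix.toEuclideanLin M v)^[k] ((LperpInv M)^[k] n)) := by
  obtain ⟨C, r, hC, hr, hr1, hbd⟩ := spec_bound M hspec
  apply Summable.of_norm_bounded (g := fun k => C * r ^ k)
  · exact (summable_geometric_of_lt_one hr.le hr1).mul_left C
  · intro k
    rw [iter_eq]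
    calc ‖Matrix.toEuclideanCLM (𝕜 := ℝ) (M ^ k) ((LperpInv M)^[k] n)‖
        ≤ C * r ^ k * ‖(LperpInv M)^[k] n‖ := hbd k _
      _ = C * r ^ k := by rw [norm_iter_LperpInv hdet hn k, mul_one]

lemma conj_eq (hdet : IsUnit M.det) (hspec : specLt1 M) (ε : ℝ) {n : E m} (hn : ‖n‖ = 1) :
    xBd M ε (Lperp M n) = Matrix.toEuclideanLin M (xBd M ε n) + ε • Lperp M n := by
  have hn0 : n ≠ 0 := by intro h; rw [h] at hn; simp at hn
  have hLn : ‖Lperp M n‖ = 1 := norm_Lperp hdet hn0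
  have hs1 := summable_aux hdet hspec hn
  have hs2 := summable_aux hdet hspec (M := M) hLn
  set f : ℕ → E m := fun k => (fun v => Matrix.toEuclideanLin M v)^[k] ((LperpInv M)^[k] n)
    with hf
  have hshift : ∀ k, (fun v => Matrix.toEuclideanLin M v)^[k + 1]
      ((LperpInv M)^[k + 1] (Lperp M n)) = Matrix.toEuclideanLin M (f k) := by
    intro k
    rw [Function.iterate_succ_apply (LperpInv M), LperpInv_Lperp hdet hn,
      Function.iterate_succ_apply']
  have hT := (Matrix.toEuclideanCLM (𝕜 := ℝ) M).map_tsum hs1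
  rw [xBd, xBd]
  rw [hs2.tsum_eq_zero_add]
  simp only [Function.iterate_zero_apply, hshift]
  have : ∑' k : ℕ, Matrix.toEuclideanLin M (f k)
      = Matrix.toEuclideanLin M (∑' k : ℕ, f k) := by
    calc ∑' k : ℕ, Matrix.toEuclideanLin M (f k)
        = ∑' k : ℕ, Matrix.toEuclideanCLM (𝕜 := ℝ) M (f k) := rfl
      _ = Matrix.toEuclideanCLM (𝕜 := ℝ) M (∑' k : ℕ, f k) := hT.symm
      _ = Matrix.toEuclideanLin M (∑' k : ℕ, f k) := rfl
  rw [this, smul_add, _root_.map_smul, add_comm]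


lemma cont_iter (hdet : IsUnit M.det) (k : ℕ) :
    Continuous (fun n : Metric.sphere (0 : E m) 1 => (LperpInv M)^[k] (n : E m)) := by
  induction k with
  | zero => simpa using continuous_subtype_val
  | succ k ih =>
    have hB : Continuous fun n : Metric.sphere (0 : E m) 1 =>
        Matrix.toEuclideanLin M.transpose ((LperpInv M)^[k] (n : E m)) :=
      (Matrix.toEuclideanCLM (𝕜 := ℝ) M.transpose).continuous.comp ih
    have hne : ∀ n : Metric.sphere (0 : E m) 1,
        ‖Matrix.toEuclideanLin M.transpose ((LperpInv M)^[k] (n : E m))‖ ≠ 0 := by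
      intro n
      have h1 : ‖(LperpInv M)^[k] (n : E m)‖ = 1 :=
        norm_iter_LperpInv hdet (mem_sphere_zero_iff_norm.mp n.2) k
      exact norm_ne_zero_iff.mpr
        (toEuc_ne_zero (detT hdet) (by intro h; rw [h] at h1; simp at h1))
    simp only [Function.iterate_succ_apply']
    unfold LperpInv
    exact (hB.norm.inv₀ hne).smul hB

lemma cont_xBd (hdet : IsUnit M.det) (hspec : specLt1 M) (ε : ℝ) :
    Continuous (fun n : Metric.sphere (0 : E m) 1 => xBd M ε (n : E m)) := by
  obtain ⟨C, r, hC, hr, hr1, hbd⟩ := spec_bound M hspec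
  unfold xBd
  apply Continuous.fun_const_smul
  apply continuous_tsum
    (f := fun (k : ℕ) (n : Metric.sphere (0 : E m) 1) =>
      (fun v => Matrix.toEuclideanLin M v)^[k] ((LperpInv M)^[k] (n : E m)))
    (u := fun k => C * r ^ k)
  · intro k
    have heq : (fun n : Metric.sphere (0 : E m) 1 =>
        (fun v => Matrix.toEuclideanLin M v)^[k] ((LperpInv M)^[k] (n : E m)))
        = fun n : Metric.sphere (0 : E m) 1 =>
          Matrix.toEuclideanCLM (𝕜 := ℝ) (M ^ k) ((LperpInv M)^[k] (n : E m)) :=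
      funext fun n => iter_eq M k _
    rw [heq]
    exact (Matrix.toEuclideanCLM (𝕜 := ℝ) (M ^ k)).continuous.comp (cont_iter hdet k)
  · exact (summable_geometric_of_lt_one hr.le hr1).mul_left C
  · intro k n
    rw [iter_eq]
    calc ‖Matrix.toEuclideanCLM (𝕜 := ℝ) (M ^ k) ((LperpInv M)^[k] (n : E m))‖
        ≤ C * r ^ k * ‖(LperpInv M)^[k] (n : E m)‖ := hbd k _
      _ = C * r ^ k := by
          rw [norm_iter_LperpInv hdet (mem_sphere_zero_iff_norm.mp n.2) k, mul_one]

/-- The restriction of the boundary map `b` to the invariant graph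
`M = {(x(n), n) : n ∈ S^{m-1}}` is topologically conjugate to `L_⊥` on the sphere, via the
projection `π(x, n) = n`. -/
theorem stmt19 {m : ℕ} (M : Matrix (Fin m) (Fin m) ℝ) (hdet : IsUnit M.det)
    (hspec : specLt1 M) (ε : ℝ) (hε : 0 < ε) :
    ∃ hb : ∀ p ∈ normalBundle M ε, bMap M ε p ∈ normalBundle M ε,
      ∃ h : normalBundle M ε ≃ₜ Metric.sphere (0 : EuclideanSpace ℝ (Fin m)) 1,
        (∀ p : normalBundle M ε, (h p : EuclideanSpace ℝ (Fin m)) = p.1.2) ∧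
        (∀ p : normalBundle M ε,
          (h ⟨bMap M ε p.1, hb p.1 p.2⟩ : EuclideanSpace ℝ (Fin m)) =
            Lperp M p.1.2) := by
  have hb : ∀ p ∈ normalBundle M ε, bMap M ε p ∈ normalBundle M ε := by
    rintro ⟨x, n⟩ ⟨h1, h2⟩
    simp only at h1 h2
    have hn0 : n ≠ 0 := by intro h; rw [h] at h1; simp at h1
    refine ⟨norm_Lperp hdet hn0, ?_⟩
    show Matrix.toEuclideanLin M x + ε • Lperp M n = xBd M ε (Lperp M n)
    rw [h2, conj_eq hdet hspec ε h1]
  refine ⟨hb, ?_⟩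
  refine ⟨{ toFun := fun p => ⟨p.1.2, mem_sphere_zero_iff_norm.mpr p.2.1⟩
            invFun := fun n => ⟨(xBd M ε n, n), ⟨mem_sphere_zero_iff_norm.mp n.2, rfl⟩⟩
            left_inv := ?_
            right_inv := fun n => rfl
            continuous_toFun := ?_
            continuous_invFun := ?_ }, fun p => rfl, fun p => rfl⟩
  · rintro ⟨⟨x, n⟩, h1, h2⟩
    exact Subtype.ext (Prod.ext h2.symm rfl)
  · exact (continuous_snd.comp continuous_subtype_val).subtype_mk _
  · exact ((cont_xBd hdet hspec ε).prodMk continuous_subtype_val).subtype_mk _
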